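/- Let X be a d-complex, σ ∈ X a face, and 0 ≤ k ≤ d − |σ|. Then for every A ⊆ X_σ(k) (a k-cochain of the link X_σ): ‖I^σ(A)‖ = binom(|σ|+k+1, k+1) · w(σ) · ‖A‖_σ. -/

import Mathlib

open Finset
open scoped symmDiff

noncomputable section

namespace HDExpansion

/-- The faces of cardinality `m` (i.e. of dimension `m - 1`) of a complex `X`. -/
def facesC (X : Finset (Finset ℕ)) (m : ℕ) : Finset (Finset ℕ) :=
  X.filter fun σ => σ.card = m

/-- `X` is a finite, pure, `d`-dimensional abstract simplicial complex:
it is nonempty, closed under subsets, and every face is contained in a face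
of cardinality `d + 1`. -/
def IsComplex (X : Finset (Finset ℕ)) (d : ℕ) : Prop :=
  X.Nonempty ∧ (∀ σ ∈ X, ∀ τ ⊆ σ, τ ∈ X) ∧
    ∀ σ ∈ X, ∃ F ∈ X, σ ⊆ F ∧ F.card = d + 1

/-- The weight of a face `σ` in the `d`-complex `X`:
`w(σ) = |{F ∈ X(d) : σ ⊆ F}| / (binom(d+1,|σ|)·|X(d)|)`. -/
def weightC (X : Finset (Finset ℕ)) (d : ℕ) (σ : Finset ℕ) : ℝ :=
  (((facesC X (d + 1)).filter fun F => σ ⊆ F).card : ℝ) /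
    (((d + 1).choose σ.card * (facesC X (d + 1)).card : ℕ) : ℝ)

/-- The norm of a cochain: `‖A‖ = Σ_{σ∈A} w(σ)`. -/
def normC (X : Finset (Finset ℕ)) (d : ℕ) (A : Finset (Finset ℕ)) : ℝ :=
  ∑ σ ∈ A, weightC X d σ

/-- The coboundary map, sending a cochain of faces of cardinality `m`
(dimension `m-1`) to the set of faces of cardinality `m+1` containing an odd
number of its elements. -/
def cobC (X : Finset (Finset ℕ)) (m : ℕ) (A : Finset (Finset ℕ)) : Finset (Finset ℕ) :=
  (facesC X (m + 1)).filter fun τ => (A.filter fun σ => σ ⊆ τ).card % 2 = 1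

/-- `A` (a cochain of faces of cardinality `m`, i.e. dimension `m-1`) is a
coboundary: `A ∈ B^{m-1}`. -/
def IsCobound (X : Finset (Finset ℕ)) (m : ℕ) (A : Finset (Finset ℕ)) : Prop :=
  ∃ γ ⊆ facesC X (m - 1), cobC X (m - 1) γ = A

/-- `A` (a cochain of faces of cardinality `m`, i.e. dimension `m-1`) is a
cocycle: `A ∈ Z^{m-1}`. -/
def IsCocycle (X : Finset (Finset ℕ)) (m : ℕ) (A : Finset (Finset ℕ)) : Prop :=
  A ⊆ facesC X m ∧ cobC X m A = ∅

/-- `min_{b ∈ B^{m-1}} ‖A + b‖` (cochain sum is symmetric difference `∆`). -/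
def distB (X : Finset (Finset ℕ)) (d m : ℕ) (A : Finset (Finset ℕ)) : ℝ :=
  sInf {r : ℝ | ∃ b, IsCobound X m b ∧ r = normC X d (A ∆ b)}

/-- `min_{z ∈ Z^{m-1}} ‖A + z‖` (cochain sum is symmetric difference `∆`). -/
def distZ (X : Finset (Finset ℕ)) (d m : ℕ) (A : Finset (Finset ℕ)) : ℝ :=
  sInf {r : ℝ | ∃ z, IsCocycle X m z ∧ r = normC X d (A ∆ z)}

/-- The link `X_σ = {τ : σ ∩ τ = ∅, σ ∪ τ ∈ X}`. -/
def link (X : Finset (Finset ℕ)) (σ : Finset ℕ) : Finset (Finset ℕ) :=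
  (X.filter fun ρ => σ ⊆ ρ).image fun ρ => ρ \ σ

/-- The localization `I_σ(A) = {τ ∈ X_σ : τ ∪ σ ∈ A}`. -/
def locF (σ : Finset ℕ) (A : Finset (Finset ℕ)) : Finset (Finset ℕ) :=
  (A.filter fun ρ => σ ⊆ ρ).image fun ρ => ρ \ σ

/-- The lifting `I^σ(A) = {τ ∪ σ : τ ∈ A}`. -/
def liftF (σ : Finset ℕ) (A : Finset (Finset ℕ)) : Finset (Finset ℕ) :=
  A.image fun τ => τ ∪ σ

/-- A cochain of faces of cardinality `m` is minimal if `‖A‖ ≤ ‖A + b‖` for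
every coboundary `b`. -/
def IsMinimal (Y : Finset (Finset ℕ)) (dY m : ℕ) (A : Finset (Finset ℕ)) : Prop :=
  ∀ b, IsCobound Y m b → normC Y dY A ≤ normC Y dY (A ∆ b)

/-- A cochain of faces of cardinality `m` is locally minimal if all its
localizations to links of nonempty faces are minimal. -/
def IsLocallyMinimal (X : Finset (Finset ℕ)) (d m : ℕ) (A : Finset (Finset ℕ)) : Prop :=
  ∀ σ ∈ X, σ ≠ ∅ → IsMinimal (link X σ) (d - σ.card) (m - σ.card) (locF σ A)

/-- `Y` (a `dY`-complex) is a `β`-coboundary expander: for every dimension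
`k = m - 1` with `0 ≤ k ≤ dY - 1` and every `k`-cochain `A ∉ B^k`,
`‖δA‖ ≥ β · min_{b ∈ B^k} ‖A+b‖`. -/
def CobExpander (Y : Finset (Finset ℕ)) (dY : ℕ) (β : ℝ) : Prop :=
  ∀ m : ℕ, 1 ≤ m → m ≤ dY → ∀ A ⊆ facesC Y m, ¬ IsCobound Y m A →
    β * distB Y dY m A ≤ normC Y dY (cobC Y m A)

/-- `E(A,A)`: the edges of `Y` with both vertices in the vertex set `A`
(vertices are identified with singleton faces). -/
def edgesIn (Y : Finset (Finset ℕ)) (A : Finset (Finset ℕ)) : Finset (Finset ℕ) :=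
  (facesC Y 2).filter fun e => ∀ v ∈ e, ({v} : Finset ℕ) ∈ A

/-- `Y` (a `dY`-complex) is an `α`-skeleton expander. -/
def SkelExpander (Y : Finset (Finset ℕ)) (dY : ℕ) (α : ℝ) : Prop :=
  ∀ A ⊆ facesC Y 1, normC Y dY (edgesIn Y A) ≤ 4 * (normC Y dY A ^ 2 + α * normC Y dY A)

/-- The `m`-skeleton of a complex (all faces of dimension at most `m`). -/
def skeleton (X : Finset (Finset ℕ)) (m : ℕ) : Finset (Finset ℕ) :=
  X.filter fun σ => σ.card ≤ m + 1


lemma mem_link_iff {X : Finset (Finset ℕ)} {σ ρ : Finset ℕ} :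
    ρ ∈ link X σ ↔ Disjoint ρ σ ∧ ρ ∪ σ ∈ X := by
  simp only [link, mem_image, mem_filter]
  constructor
  · rintro ⟨F, ⟨hF, hσF⟩, rfl⟩
    refine ⟨sdiff_disjoint, ?_⟩
    rwa [sdiff_union_of_subset hσF]
  · rintro ⟨hd, hu⟩
    exact ⟨ρ ∪ σ, ⟨hu, subset_union_right⟩, by rw [union_sdiff_right, sdiff_eq_self_of_disjoint hd]⟩

lemma card_filter_link (X : Finset (Finset ℕ)) (d : ℕ) (σ τ : Finset ℕ)
    (hs : σ.card ≤ d) (hdisj : Disjoint τ σ) :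
    ((facesC (link X σ) (d - σ.card + 1)).filter fun ρ => τ ⊆ ρ).card
      = ((facesC X (d + 1)).filter fun F => σ ∪ τ ⊆ F).card := by
  apply Finset.card_bij (fun ρ _ => ρ ∪ σ)
  · intro ρ hρ
    simp only [facesC, mem_filter, mem_link_iff] at hρ ⊢
    obtain ⟨⟨⟨hd, hu⟩, hc⟩, hτ⟩ := hρ
    refine ⟨⟨hu, ?_⟩, union_subset (subset_union_right) (hτ.trans subset_union_left)⟩
    rw [card_union_of_disjoint hd, hc]
    omega
  · intro ρ₁ h₁ ρ₂ h₂ heq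
    simp only [facesC, mem_filter, mem_link_iff] at h₁ h₂
    have e1 : ρ₁ = (ρ₁ ∪ σ) \ σ := by
      rw [union_sdiff_right, sdiff_eq_self_of_disjoint h₁.1.1.1]
    have e2 : ρ₂ = (ρ₂ ∪ σ) \ σ := by
      rw [union_sdiff_right, sdiff_eq_self_of_disjoint h₂.1.1.1]
    rw [e1, e2, heq]
  · intro F hF
    simp only [facesC, mem_filter] at hF
    obtain ⟨⟨hFX, hFc⟩, hsub⟩ := hF
    have hσF : σ ⊆ F := subset_union_left.trans hsub
    refine ⟨F \ σ, ?_, ?_⟩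
    · simp only [facesC, mem_filter, mem_link_iff]
      refine ⟨⟨⟨sdiff_disjoint, by rwa [sdiff_union_of_subset hσF]⟩, ?_⟩, ?_⟩
      · rw [card_sdiff_of_subset hσF, hFc]; omega
      · intro x hx
        exact mem_sdiff.2 ⟨hsub (mem_union_right _ hx), fun hxσ => hdisj.forall_ne_finset hx hxσ rfl⟩
    · rw [sdiff_union_of_subset hσF]


lemma key_arith (a n0 T c1 c2 c3 c4 : ℝ) (hn0 : n0 ≠ 0) (hT : T ≠ 0)
    (hc1 : c1 ≠ 0) (hc3 : c3 ≠ 0) (hc4 : c4 ≠ 0) (h : c3 * c4 = c2 * c1) :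
    a / (c1 * T) = c2 * (n0 / (c3 * T)) * (a / (c4 * n0)) := by
  field_simp
  linear_combination a * h


/-- `‖I^σ(A)‖ = binom(|σ|+k+1, k+1) · w(σ) · ‖A‖_σ` for a
`k`-cochain `A` of the link `X_σ`, `0 ≤ k ≤ d - |σ|`. -/
theorem statement_4 (d : ℕ) (X : Finset (Finset ℕ)) (hX : IsComplex X d)
    (σ : Finset ℕ) (hσ : σ ∈ X) (k : ℕ) (hk : (k : ℤ) ≤ (d : ℤ) - (σ.card : ℤ))
    (A : Finset (Finset ℕ)) (hA : A ⊆ facesC (link X σ) (k + 1)) :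
    normC X d (liftF σ A) =
      ((σ.card + k + 1).choose (k + 1) : ℝ) * weightC X d σ *
        normC (link X σ) (d - σ.card) A := by
  obtain ⟨-, -, htop⟩ := hX
  obtain ⟨F₀, hF₀X, hσF₀, hF₀c⟩ := htop σ hσ
  set s := σ.card with hs_def
  have hskd : s + k ≤ d := by omega
  have hsd : s ≤ d := by omega
  have hF₀mem : F₀ ∈ facesC X (d + 1) := mem_filter.2 ⟨hF₀X, hF₀c⟩
  have hT : 0 < ((facesC X (d + 1)).card : ℝ) := by
    exact_mod_cast card_pos.2 ⟨F₀, hF₀mem⟩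
  have hn0 : 0 < (((facesC X (d + 1)).filter fun F => σ ⊆ F).card : ℝ) := by
    exact_mod_cast card_pos.2 ⟨F₀, mem_filter.2 ⟨hF₀mem, hσF₀⟩⟩
  have hlinktop : (facesC (link X σ) (d - s + 1)).card
      = ((facesC X (d + 1)).filter fun F => σ ⊆ F).card := by
    have h := card_filter_link X d σ ∅ hsd (disjoint_empty_left σ)
    simpa using h
  have hAd : ∀ τ ∈ A, Disjoint τ σ ∧ τ.card = k + 1 := by
    intro τ hτ
    have h := hA hτ
    rw [facesC, mem_filter, mem_link_iff] at h
    exact ⟨h.1.1, h.2⟩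
  have hinj : Set.InjOn (fun τ => τ ∪ σ) A := by
    intro τ₁ h₁ τ₂ h₂ heq
    have e1 : τ₁ = (τ₁ ∪ σ) \ σ := by
      rw [union_sdiff_right, sdiff_eq_self_of_disjoint (hAd τ₁ h₁).1]
    have e2 : τ₂ = (τ₂ ∪ σ) \ σ := by
      rw [union_sdiff_right, sdiff_eq_self_of_disjoint (hAd τ₂ h₂).1]
    rw [e1, e2]
    exact congrArg (· \ σ) heq
  rw [normC, liftF, sum_image hinj, normC, Finset.mul_sum]
  apply Finset.sum_congr rfl
  intro τ hτ
  obtain ⟨hdisj, hτc⟩ := hAd τ hτ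
  have hcard : (τ ∪ σ).card = s + k + 1 := by
    rw [card_union_of_disjoint hdisj, hτc]; omega
  have hnum : ((facesC (link X σ) (d - s + 1)).filter fun ρ => τ ⊆ ρ).card
      = ((facesC X (d + 1)).filter fun F => τ ∪ σ ⊆ F).card := by
    rw [card_filter_link X d σ τ hsd hdisj, union_comm]
  rw [weightC, weightC, weightC, hcard, hτc, hlinktop]
  have hds : d - s + 1 = d + 1 - s := by omega
  have hchoose : (d + 1).choose s * (d - s + 1).choose (k + 1)
      = (s + k + 1).choose (k + 1) * (d + 1).choose (s + k + 1) := by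
    have h := Nat.choose_mul (n := d + 1) (k := s + k + 1) (s := s)
      (by omega)
    have hsymm : (s + k + 1).choose s = (s + k + 1).choose (k + 1) := by
      have := Nat.choose_symm (n := s + k + 1) (k := k + 1) (by omega)
      simpa [show s + k + 1 - (k + 1) = s by omega] using this
    rw [show s + k + 1 - s = k + 1 by omega] at h
    rw [hsymm] at h
    rw [hds, ← h, Nat.mul_comm]
  rw [hnum]
  have hc1 : (0 : ℝ) < ((d + 1).choose (s + k + 1) : ℝ) := by
    exact_mod_cast Nat.choose_pos (by omega)
  have hc3 : (0 : ℝ) < ((d + 1).choose s : ℝ) := by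
    exact_mod_cast Nat.choose_pos (by omega)
  have hc4 : (0 : ℝ) < ((d - s + 1).choose (k + 1) : ℝ) := by
    exact_mod_cast Nat.choose_pos (by omega)
  have hchooseR : ((d + 1).choose s : ℝ) * ((d - s + 1).choose (k + 1) : ℝ)
      = ((s + k + 1).choose (k + 1) : ℝ) * ((d + 1).choose (s + k + 1) : ℝ) := by
    exact_mod_cast congrArg (Nat.cast : ℕ → ℝ) hchoose
  rw [Nat.cast_mul, Nat.cast_mul, Nat.cast_mul]
  exact key_arith _ _ _ _ _ _ _ hn0.ne' hT.ne' hc1.ne' hc3.ne' hc4.ne' hchooseR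


end HDExpansion
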